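/- Let H be a connected q-regular graph of order n with adjacency spectrum {q, γ_2(H)^{[h_2]}, ..., γ_t(H)^{[h_t]}}. Then for every integer k ≥ 1, the lexicographic power H^k is a regular graph of degree r_k = q·(n^k − 1)/(n − 1), of order n^k, and its adjacency spectrum is the multiset (⋃_{i=0}^{k−1} {(n^i γ_2(H) + r_i)^{[n^{k−1−i} h_2]}, ..., (n^i γ_t(H) + r_i)^{[n^{k−1−i} h_t]}}) ∪ {r_k}, where r_i = q·(n^i − 1)/(n − 1). -/

import Mathlib

open Matrix Finset

universe u

/-- The lexicographic product `H[G]` of two simple graphs. -/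
def lexProd {α β : Type u} (H : SimpleGraph α) (G : SimpleGraph β) :
    SimpleGraph (α × β) where
  Adj x y := H.Adj x.1 y.1 ∨ (x.1 = y.1 ∧ G.Adj x.2 y.2)
  symm.symm x y h := by
    rcases h with h | ⟨h1, h2⟩
    · exact Or.inl h.symm
    · exact Or.inr ⟨h1.symm, h2.symm⟩
  loopless.irrefl x h := by
    rcases h with h | ⟨_, h2⟩
    · exact H.irrefl h
    · exact G.irrefl h2

/-- Vertex type of the iterated lexicographic product `H^k[G]`. -/
def lexIterVert (α β : Type u) : ℕ → Type u
  | 0 => β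
  | k + 1 => α × lexIterVert α β k

/-- Iterated lexicographic product: `H^0[G] = G`, `H^k[G] = H[H^{k-1}[G]]`. -/
def lexIter {α β : Type u} (H : SimpleGraph α) (G : SimpleGraph β) :
    (k : ℕ) → SimpleGraph (lexIterVert α β k)
  | 0 => G
  | k + 1 => lexProd H (lexIter H G k)

instance lexIterVert.instFintype {α β : Type u} [Fintype α] [Fintype β] :
    ∀ k, Fintype (lexIterVert α β k)
  | 0 => inferInstanceAs (Fintype β)
  | k + 1 =>
      letI := lexIterVert.instFintype (α := α) (β := β) k
      inferInstanceAs (Fintype (α × lexIterVert α β k))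

/-- Vertex type of the lexicographic power `H^k` (with `H^0 = K_1`). -/
def powVert (α : Type u) : ℕ → Type u
  | 0 => PUnit
  | 1 => α
  | k + 2 => powVert α (k + 1) × α

/-- Lexicographic powers of a graph: `H^1 = H` and `H^k = H^{k-1}[H]` for `k ≥ 2`. -/
def lexPow {α : Type u} (H : SimpleGraph α) : (k : ℕ) → SimpleGraph (powVert α k)
  | 0 => ⊥
  | 1 => H
  | k + 2 => lexProd (lexPow H (k + 1)) H

instance powVert.instFintype {α : Type u} [Fintype α] : ∀ k, Fintype (powVert α k)
  | 0 => inferInstanceAs (Fintype PUnit)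
  | 1 => inferInstanceAs (Fintype α)
  | k + 2 =>
      letI := powVert.instFintype (α := α) (k + 1)
      inferInstanceAs (Fintype (powVert α (k + 1) × α))

/-- The degree of a vertex. -/
noncomputable def gdeg {α : Type u} [Fintype α] (G : SimpleGraph α) (v : α) : ℕ := by
  classical exact G.degree v

/-- The adjacency spectrum of a graph, as the multiset of roots (eigenvalues, with
multiplicity) of the characteristic polynomial of its adjacency matrix over `ℝ`. -/
noncomputable def adjSpectrum {α : Type u} [Fintype α] (G : SimpleGraph α) : Multiset ℝ := by
  classical exact (Matrix.charpoly (G.adjMatrix ℝ)).roots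

/-- The Laplacian spectrum of a graph, as the multiset of roots (eigenvalues, with
multiplicity) of the characteristic polynomial of its Laplacian matrix over `ℝ`. -/
noncomputable def lapSpectrum {α : Type u} [Fintype α] (G : SimpleGraph α) : Multiset ℝ := by
  classical exact (Matrix.charpoly (G.lapMatrix ℝ)).roots
open scoped Kronecker
open Polynomial


theorem charpoly_conj' {m : Type*} [Fintype m] [DecidableEq m] (M S D : Matrix m m ℝ)
    (hS : IsUnit S.det) (h : M * S = S * D) : M.charpoly = D.charpoly := by
  have h1 : (S.map C) * charmatrix D = charmatrix M * (S.map C) := by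
    unfold charmatrix
    rw [mul_sub, sub_mul]
    congr 1
    · exact (Matrix.scalar_commute X (fun r => Commute.all _ r) (S.map C)).symm
    · rw [RingHom.mapMatrix_apply, RingHom.mapMatrix_apply, ← Matrix.map_mul, ← Matrix.map_mul, h]
  have h2 := congrArg Matrix.det h1
  rw [det_mul, det_mul] at h2
  have h3 : (S.map C).det = C S.det := (RingHom.map_det C S).symm
  rw [h3] at h2
  have h4 : (C S.det) ≠ 0 := by
    simpa using fun hh => by simp [hh] at hS
  unfold Matrix.charpoly
  rw [mul_comm (C S.det) _] at h2
  exact mul_right_cancel₀ h4 h2.symm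

theorem charpoly_diagonal' {m : Type*} [Fintype m] [DecidableEq m] (v : m → ℝ) :
    (Matrix.diagonal v).charpoly = ∏ i, (X - C (v i)) := by
  have : charmatrix (Matrix.diagonal v) = Matrix.diagonal fun i => X - C (v i) := by
    ext i j
    by_cases hij : i = j
    · subst hij; simp [charmatrix_apply_eq]
    · rw [charmatrix_apply_ne _ _ _ hij, Matrix.diagonal_apply_ne _ hij,
        Matrix.diagonal_apply_ne _ hij]
      simp
  rw [Matrix.charpoly, this, Matrix.det_diagonal]

theorem roots_charpoly_diagonal {m : Type*} [Fintype m] [DecidableEq m] (v : m → ℝ) :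
    (Matrix.diagonal v).charpoly.roots = Multiset.map v Finset.univ.val := by
  rw [charpoly_diagonal']
  have : ∏ i, (X - C (v i)) = ((Multiset.map v Finset.univ.val).map fun a => X - C a).prod := by
    rw [Multiset.map_map]; rfl
  rw [this, roots_multiset_prod_X_sub_C]


lemma lexProd_adj {β α : Type u} (G' : SimpleGraph β) (H : SimpleGraph α) (x y : β × α) :
    (lexProd G' H).Adj x y ↔ G'.Adj x.1 y.1 ∨ (x.1 = y.1 ∧ H.Adj x.2 y.2) := Iff.rfl

lemma adjSpectrum_eq {γ : Type u} [Fintype γ] [DecidableEq γ] (G : SimpleGraph γ) [inst : DecidableRel G.Adj] :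
    adjSpectrum G = (Matrix.charpoly (G.adjMatrix ℝ)).roots := by
  unfold adjSpectrum
  congr!


lemma gdeg_eq_degree {γ : Type u} [Fintype γ] (G : SimpleGraph γ) (v : γ)
    [i : Fintype (G.neighborSet v)] : gdeg G v = G.degree v := by
  unfold gdeg; congr!

lemma adjMatrix_lexProd {β α : Type u} [Fintype β] [Fintype α] [DecidableEq β]
    (G' : SimpleGraph β) (H : SimpleGraph α)
    [DecidableRel G'.Adj] [DecidableRel H.Adj] [DecidableRel (lexProd G' H).Adj] :
    (lexProd G' H).adjMatrix ℝ =
      (G'.adjMatrix ℝ) ⊗ₖ (Matrix.of fun _ _ : α => (1:ℝ))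
        + (1 : Matrix β β ℝ) ⊗ₖ (H.adjMatrix ℝ) := by
  ext ⟨a,b⟩ ⟨c,d⟩
  simp only [SimpleGraph.adjMatrix_apply, Matrix.add_apply, Matrix.kroneckerMap_apply,
    Matrix.of_apply, Matrix.one_apply, lexProd_adj]
  by_cases h1 : G'.Adj a c
  · have hac : a ≠ c := G'.ne_of_adj h1
    simp [h1, hac]
  · by_cases h2 : a = c
    · subst h2; by_cases h3 : H.Adj b d <;> simp [h1, h3]
    · simp [h1, h2]

lemma degree_lexProd {β α : Type u} [Fintype β] [Fintype α] [DecidableEq β] [DecidableEq α]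
    (G' : SimpleGraph β) (H : SimpleGraph α)
    [DecidableRel G'.Adj] [DecidableRel H.Adj] [DecidableRel (lexProd G' H).Adj]
    (a : β) (b : α) :
    (lexProd G' H).degree (a,b) = Fintype.card α * G'.degree a + H.degree b := by
  classical
  have hnb : (lexProd G' H).neighborFinset (a,b)
      = (G'.neighborFinset a ×ˢ (Finset.univ : Finset α)) ∪ ({a} ×ˢ H.neighborFinset b) := by
    ext ⟨c,d⟩
    simp only [SimpleGraph.mem_neighborFinset, lexProd_adj, Finset.mem_union, Finset.mem_product,
      Finset.mem_univ, Finset.mem_singleton, and_true]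
    constructor
    · rintro (h | ⟨h1, h2⟩)
      · exact Or.inl h
      · exact Or.inr ⟨h1.symm, h2⟩
    · rintro (h | ⟨h1, h2⟩)
      · exact Or.inl h
      · exact Or.inr ⟨h1.symm, h2⟩
  have hdisj : Disjoint (G'.neighborFinset a ×ˢ (Finset.univ : Finset α))
      ({a} ×ˢ H.neighborFinset b) := by
    rw [Finset.disjoint_left]
    rintro ⟨c,d⟩ hc hc'
    simp only [Finset.mem_product, SimpleGraph.mem_neighborFinset, Finset.mem_singleton] at hc hc'
    exact G'.ne_of_adj hc.1 hc'.1.symm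
  rw [← SimpleGraph.card_neighborFinset_eq_degree, hnb, Finset.card_union_of_disjoint hdisj,
    Finset.card_product, Finset.card_product, Finset.card_singleton, one_mul,
    SimpleGraph.card_neighborFinset_eq_degree, SimpleGraph.card_neighborFinset_eq_degree,
    Finset.card_univ]
  ring

lemma card_powVert {α : Type u} [Fintype α] : ∀ k, 1 ≤ k →
    Fintype.card (powVert α k) = (Fintype.card α) ^ k
  | 1, _ => by simp [powVert]; rfl
  | (k+2), _ => by
    have ih := card_powVert (α := α) (k+1) (Nat.le_add_left 1 k)
    show Fintype.card (powVert α (k+1) × α) = _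
    rw [Fintype.card_prod, ih, ← pow_succ]

lemma multiset_map_univ {γ : Type u} [Fintype γ] (f : γ → ℝ) :
    Multiset.map f Finset.univ.val = ∑ x : γ, ({f x} : Multiset ℝ) := by
  induction (Finset.univ : Finset γ) using Finset.cons_induction with
  | empty => simp
  | cons a s ha ih =>
    rw [Finset.sum_cons, ← ih, Finset.cons_val, Multiset.map_cons]
    rfl

lemma key_step {β α : Type u} [Fintype β] [Fintype α] [DecidableEq β] [DecidableEq α]
    (G' : SimpleGraph β) (H : SimpleGraph α)
    [DecidableRel G'.Adj] [DecidableRel H.Adj] [DecidableRel (lexProd G' H).Adj]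
    (S : Matrix β β ℝ) (w : β → ℝ) (hS : IsUnit S.det)
    (hSd : G'.adjMatrix ℝ * S = S * Matrix.diagonal w)
    (B : Matrix α α ℝ) (e : α → ℝ) (s0 : α) (hB : IsUnit B.det)
    (hBd : H.adjMatrix ℝ * B = B * Matrix.diagonal e)
    (hJB : (Matrix.of fun _ _ : α => (1:ℝ)) * B
      = B * Matrix.diagonal (fun j => if j = s0 then (Fintype.card α : ℝ) else 0)) :
    IsUnit (S ⊗ₖ B).det ∧
    (lexProd G' H).adjMatrix ℝ * (S ⊗ₖ B) = (S ⊗ₖ B) *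
      Matrix.diagonal (fun p : β × α =>
        w p.1 * (if p.2 = s0 then (Fintype.card α : ℝ) else 0) + e p.2) := by
  constructor
  · rw [Matrix.det_kronecker]
    exact (hS.pow _).mul (hB.pow _)
  · rw [adjMatrix_lexProd, Matrix.add_mul, ← Matrix.mul_kronecker_mul,
      ← Matrix.mul_kronecker_mul, hSd, hJB, hBd, Matrix.one_mul]
    have h2 : S ⊗ₖ (B * Matrix.diagonal e) = (S * 1) ⊗ₖ (B * Matrix.diagonal e) := by
      rw [Matrix.mul_one]
    rw [h2, Matrix.mul_kronecker_mul, Matrix.mul_kronecker_mul, ← Matrix.mul_add]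
    congr 1
    rw [← Matrix.diagonal_one, Matrix.diagonal_kronecker_diagonal,
      Matrix.diagonal_kronecker_diagonal, ← Matrix.diagonal_add]
    congr 1
    ext p
    simp [Pi.one_apply]

lemma step_multiset {β α : Type u} [Fintype β] [Fintype α] [DecidableEq α]
    (w : β → ℝ) (e : α → ℝ) (s0 : α) (q nn : ℝ) (he : e s0 = q) :
    Multiset.map (fun p : β × α => w p.1 * (if p.2 = s0 then nn else 0) + e p.2)
        Finset.univ.val
      = Multiset.map (fun x => nn * x + q) (Multiset.map w Finset.univ.val)
        + (Fintype.card β) • (∑ j ∈ Finset.univ.erase s0, ({e j} : Multiset ℝ)) := by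
  rw [Multiset.map_map, multiset_map_univ, multiset_map_univ]
  rw [Fintype.sum_prod_type]
  have inner : ∀ s : β, (∑ j : α, ({w s * (if j = s0 then nn else 0) + e j} : Multiset ℝ))
      = ({nn * w s + q} : Multiset ℝ) + ∑ j ∈ Finset.univ.erase s0, ({e j} : Multiset ℝ) := by
    intro s
    rw [← Finset.add_sum_erase _ _ (Finset.mem_univ s0)]
    congr 1
    · rw [if_pos rfl, he, mul_comm]
    · refine Finset.sum_congr rfl fun j hj => ?_
      rw [if_neg (Finset.ne_of_mem_erase hj), mul_zero, zero_add]
  simp_rw [inner]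
  rw [Finset.sum_add_distrib, Finset.sum_const, Finset.card_univ]
  rfl

lemma exists_eigenbasis {α : Type u} [Fintype α] [DecidableEq α] [Nonempty α]
    (H : SimpleGraph α) [DecidableRel H.Adj] (q : ℕ) (hreg : ∀ v, H.degree v = q) :
    ∃ (B : Matrix α α ℝ) (e : α → ℝ) (s0 : α),
      IsUnit B.det ∧
      H.adjMatrix ℝ * B = B * Matrix.diagonal e ∧
      ((Matrix.of fun _ _ : α => (1:ℝ)) * B
        = B * Matrix.diagonal (fun j => if j = s0 then (Fintype.card α : ℝ) else 0)) ∧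
      e s0 = (q : ℝ) ∧
      Multiset.map e Finset.univ.val = (H.adjMatrix ℝ).charpoly.roots := by
  classical
  set A := H.adjMatrix ℝ with hAdef
  have hA : A.IsHermitian := by
    rw [Matrix.IsHermitian, Matrix.conjTranspose_eq_transpose_of_trivial,
      SimpleGraph.transpose_adjMatrix]
  set Q : Matrix α α ℝ := (Matrix.IsHermitian.eigenvectorUnitary hA : Matrix α α ℝ) with hQdef
  have hQ1 : Q * star Q = 1 :=
    Matrix.mem_unitaryGroup_iff.mp (Matrix.IsHermitian.eigenvectorUnitary hA).2
  have hQ2 : star Q * Q = 1 :=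
    Matrix.mem_unitaryGroup_iff'.mp (Matrix.IsHermitian.eigenvectorUnitary hA).2
  set e0 : α → ℝ := hA.eigenvalues with he0def
  have hspecQ : A * Q = Q * Matrix.diagonal e0 := by
    have hst := hA.spectral_theorem
    rw [RCLike.ofReal_real_eq_id] at hst
    calc A * Q = Q * Matrix.diagonal e0 * (star Q * Q) := by
          rw [hQ2, mul_one]
          conv_lhs => rw [hst]
          simp [Function.comp_def, mul_assoc]
          rw [show (star (hA.eigenvectorUnitary : Matrix α α ℝ)) * Q = 1 from hQ2, mul_one, hQdef, he0def]
      _ = Q * Matrix.diagonal e0 := by rw [hQ2, mul_one]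
  have hQu : IsUnit Q.det := by
    apply Matrix.isUnit_det_of_right_inverse hQ1
  -- the all ones vector
  set ones : α → ℝ := fun _ => 1 with honesdef
  have hones : A *ᵥ ones = (q:ℝ) • ones := by
    funext v
    have h0 : (A *ᵥ Function.const α (1:ℝ)) v = (H.degree v : ℝ) * 1 :=
      SimpleGraph.adjMatrix_mulVec_const_apply
    rw [hreg v, mul_one] at h0
    have h0' : (A *ᵥ ones) v = (q : ℝ) := h0
    rw [h0']
    simp [honesdef]
  set c : α → ℝ := star Q *ᵥ ones with hcdef
  have hQc : Q *ᵥ c = ones := by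
    rw [hcdef, Matrix.mulVec_mulVec, hQ1, Matrix.one_mulVec]
  have heig : ∀ i, e0 i * c i = (q:ℝ) * c i := by
    have h1 : Q *ᵥ (Matrix.diagonal e0 *ᵥ c) = Q *ᵥ ((q:ℝ) • c) := by
      rw [Matrix.mulVec_mulVec, ← hspecQ, ← Matrix.mulVec_mulVec, hQc, hones,
        Matrix.mulVec_smul, hQc]
    have h2 : Matrix.diagonal e0 *ᵥ c = (q:ℝ) • c := by
      have h2a := congrArg (fun z => star Q *ᵥ z) h1
      simp only [Matrix.mulVec_mulVec] at h2a
      rw [← mul_assoc, hQ2, one_mul] at h2a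
      rw [h2a, Matrix.one_mulVec]
    intro i
    have := congrFun h2 i
    rwa [Matrix.mulVec_diagonal] at this
  have hcol : ∀ j, (∑ u, Q u j) = c j := by
    intro j
    rw [hcdef]
    simp [Matrix.mulVec, dotProduct, honesdef, Matrix.star_apply]
  obtain ⟨s0, hcs0⟩ : ∃ s0, c s0 ≠ 0 := by
    by_contra hcon
    push_neg at hcon
    have : ones = 0 := by
      rw [← hQc]
      have : c = 0 := funext hcon
      rw [this, Matrix.mulVec_zero]
    have := congrFun this (Classical.arbitrary α)
    simp [honesdef] at this
  have hes0 : e0 s0 = (q : ℝ) := mul_right_cancel₀ hcs0 (heig s0)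
  set N : ℝ := ∑ i, c i ^ 2 with hNdef
  have hNpos : 0 < N := by
    have h1 : c s0 ^ 2 ≤ N :=
      Finset.single_le_sum (fun i _ => sq_nonneg (c i)) (Finset.mem_univ s0)
    exact lt_of_lt_of_le (pow_pos (abs_pos.mpr hcs0) 2 |>.trans_eq (by rw [sq_abs])) h1
  set T : Matrix α α ℝ := Matrix.of fun r s =>
    if s = s0 then c r else if r = s then 1 else if r = s0 then -(c s / c s0) else 0 with hTdef
  have hTapp : ∀ r s, T r s =
      (if s = s0 then c r else if r = s then 1 else if r = s0 then -(c s / c s0) else 0) :=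
    fun _ _ => rfl
  -- T commutes with diagonal e0
  have hTcomm : Matrix.diagonal e0 * T = T * Matrix.diagonal e0 := by
    ext r s
    rw [Matrix.diagonal_mul, Matrix.mul_diagonal, hTapp]
    by_cases hs : s = s0
    · subst hs
      simp only [eq_self_iff_true, if_true]
      rw [heig r, hes0]
      ring
    · by_cases hrs : r = s
      · subst hrs; ring
      · by_cases hr0 : r = s0
        · subst hr0
          simp only [hs, if_false, if_neg hrs, if_pos rfl]
          rw [hes0]
          rcases eq_or_ne (c s) 0 with h|h
          · simp [h]
          · have h5 : e0 s = (q:ℝ) := mul_right_cancel₀ h (heig s)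
            rw [h5]; ring
        · simp [hs, hrs, hr0]
  -- T is invertible
  have hTunit : IsUnit T.det := by
    rw [← Matrix.isUnit_iff_isUnit_det]
    rw [← Matrix.mulVec_injective_iff_isUnit]
    have hker : ∀ x, T *ᵥ x = 0 → x = 0 := by
      intro x hx
      have hrow : ∀ r, r ≠ s0 → c r * x s0 + x r = 0 := by
        intro r hr
        have h6 := congrFun hx r
        have h7 : (T *ᵥ x) r = c r * x s0 + x r := by
          rw [Matrix.mulVec]
          have : ∀ s, T r s * x s =
              (if s = s0 then c r * x s0 else 0) + (if s = r then x r else 0) := by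
            intro s
            rw [hTapp]
            by_cases hss : s = s0
            · subst hss
              rw [if_pos rfl, if_pos rfl, if_neg (fun hh => hr hh.symm), add_zero]
            · rw [if_neg hss]
              by_cases hsr : r = s
              · rw [if_pos hsr, one_mul, if_neg hss, if_pos hsr.symm, zero_add, hsr]
              · rw [if_neg hsr, if_neg hr, zero_mul, if_neg hss,
                  if_neg (fun hh => hsr hh.symm), add_zero]
          rw [dotProduct]
          simp_rw [this]
          rw [Finset.sum_add_distrib, Finset.sum_ite_eq', Finset.sum_ite_eq']
          simp
        rw [h7] at h6
        simpa using h6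
      have hxs0 : x s0 = 0 := by
        have h6 := congrFun hx s0
        simp only [Pi.zero_apply] at h6
        have h7 : (T *ᵥ x) s0 = c s0 * x s0 + ∑ s ∈ Finset.univ.erase s0,
            (-(c s / c s0)) * x s := by
          rw [Matrix.mulVec, dotProduct,
            ← Finset.add_sum_erase _ _ (Finset.mem_univ s0), hTapp, if_pos rfl]
          congr 1
          refine Finset.sum_congr rfl fun s hs => ?_
          rw [hTapp, if_neg (Finset.ne_of_mem_erase hs),
            if_neg (fun hh => (Finset.ne_of_mem_erase hs) hh.symm), if_pos rfl]
        rw [h7] at h6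
        have h8 : ∀ s ∈ Finset.univ.erase s0, (-(c s / c s0)) * x s = c s ^ 2 / c s0 * x s0 := by
          intro s hs
          have := hrow s (Finset.ne_of_mem_erase hs)
          have hxs : x s = -(c s * x s0) := by linarith
          rw [hxs]
          field_simp
        rw [Finset.sum_congr rfl h8, ← Finset.sum_mul, ← Finset.sum_div] at h6
        have h9 : ∑ s ∈ Finset.univ.erase s0, c s ^ 2 = N - c s0 ^ 2 := by
          rw [hNdef, ← Finset.add_sum_erase _ _ (Finset.mem_univ s0)]
          ring
        rw [h9] at h6
        have h10 : (c s0 + (N - c s0 ^ 2) / c s0) * x s0 = 0 := by rw [add_mul]; linarith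
        have h11 : c s0 + (N - c s0 ^ 2) / c s0 = N / c s0 := by
          field_simp
          ring
        rw [h11] at h10
        rcases mul_eq_zero.mp h10 with h | h
        · exact absurd h (div_ne_zero (ne_of_gt hNpos) hcs0)
        · exact h
      funext r
      by_cases hr : r = s0
      · rw [hr, hxs0]; rfl
      · have := hrow r hr
        rw [hxs0, mul_zero, zero_add] at this
        exact this
    intro x y hxy
    have : T *ᵥ (x - y) = 0 := by
      rw [Matrix.mulVec_sub, hxy, sub_self]
    have := hker _ this
    exact sub_eq_zero.mp this
  set B : Matrix α α ℝ := Q * T with hBdef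
  have hBunit : IsUnit B.det := by
    rw [hBdef, Matrix.det_mul]
    exact hQu.mul hTunit
  have hBd : A * B = B * Matrix.diagonal e0 := by
    rw [hBdef, ← mul_assoc, hspecQ, mul_assoc, hTcomm, ← mul_assoc]
  have hBcol0 : ∀ r, B r s0 = 1 := by
    intro r
    have h12 : B r s0 = ∑ u, Q r u * c u := by
      rw [hBdef, Matrix.mul_apply]
      refine Finset.sum_congr rfl fun u _ => ?_
      rw [hTapp, if_pos rfl]
    have h13 := congrFun hQc r
    rw [Matrix.mulVec, dotProduct] at h13
    rw [h12, h13]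
  have hBcolsum : ∀ s, s ≠ s0 → ∑ u, B u s = 0 := by
    intro s hs
    have h14 : ∀ u, B u s = ∑ w, Q u w * T w s := fun u => Matrix.mul_apply
    calc ∑ u, B u s = ∑ w, (∑ u, Q u w) * T w s := by
          simp_rw [h14]
          rw [Finset.sum_comm]
          simp_rw [Finset.sum_mul]
      _ = ∑ w, c w * T w s := by simp_rw [hcol]
      _ = 0 := by
          have : ∀ w, c w * T w s =
              (if w = s then c s else 0) + (if w = s0 then -(c s0 * (c s / c s0)) else 0) := by
            intro w
            rw [hTapp, if_neg hs]
            by_cases hws : w = s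
            · rw [if_pos hws, if_pos hws, mul_one,
                if_neg (show w ≠ s0 by rw [hws]; exact hs), add_zero, hws]
            · by_cases hw0 : w = s0
              · rw [if_neg hws, if_neg hws, if_pos hw0, if_pos hw0, zero_add, hw0]
                ring
              · rw [if_neg hws, if_neg hws, if_neg hw0, if_neg hw0, mul_zero, add_zero]
          simp_rw [this]
          rw [Finset.sum_add_distrib, Finset.sum_ite_eq', Finset.sum_ite_eq']
          simp only [Finset.mem_univ, if_true]
          field_simp
          ring
  have hJB : (Matrix.of fun _ _ : α => (1:ℝ)) * B
      = B * Matrix.diagonal (fun j => if j = s0 then (Fintype.card α : ℝ) else 0) := by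
    ext r s
    rw [Matrix.mul_diagonal, Matrix.mul_apply]
    have hL : ∑ u, (Matrix.of fun _ _ : α => (1:ℝ)) r u * B u s = ∑ u, B u s := by
      refine Finset.sum_congr rfl fun u _ => ?_
      simp
    rw [hL]
    by_cases hs : s = s0
    · subst hs
      simp only [eq_self_iff_true, if_true]
      calc ∑ u, B u s = ∑ _u : α, (1:ℝ) := by simp_rw [hBcol0]
        _ = (Fintype.card α : ℝ) := by rw [Finset.sum_const, Finset.card_univ]; simp
        _ = B r s * (Fintype.card α : ℝ) := by rw [hBcol0 r, one_mul]
    · rw [if_neg hs, hBcolsum s hs, mul_zero]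
  have hmel : Multiset.map e0 Finset.univ.val = A.charpoly.roots := by
    have := charpoly_conj' A Q (Matrix.diagonal e0) hQu hspecQ
    rw [this, roots_charpoly_diagonal]
  exact ⟨B, e0, s0, hBunit, hBd, hJB, hes0, hmel⟩

lemma multiset_map_finset_sum {ι : Type*} (s : Finset ι) (g : ι → Multiset ℝ) (f : ℝ → ℝ) :
    Multiset.map f (∑ i ∈ s, g i) = ∑ i ∈ s, Multiset.map f (g i) := by
  induction s using Finset.cons_induction with
  | empty => simp
  | cons a s ha ih => rw [Finset.sum_cons, Finset.sum_cons, Multiset.map_add, ih]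

lemma formula_step (n q t : ℕ) (gamH : Fin (t+1) → ℝ) (h : Fin (t+1) → ℕ) (r : ℕ → ℕ)
    (hrec : ∀ i, ((r (i+1) : ℕ) : ℝ) = n * r i + q) (hr0 : r 0 = 0) (k : ℕ) :
    Multiset.map (fun x => (n:ℝ) * x + (q:ℝ))
        ((∑ i ∈ Finset.range k, ∑ j ∈ Finset.univ.erase 0,
          Multiset.replicate (n ^ (k - 1 - i) * h j) ((n : ℝ) ^ i * gamH j + (r i : ℝ)))
          + {((r k : ℕ) : ℝ)})
      + n^k • (∑ j ∈ Finset.univ.erase 0, Multiset.replicate (h j) (gamH j))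
    = (∑ i ∈ Finset.range (k+1), ∑ j ∈ Finset.univ.erase 0,
          Multiset.replicate (n ^ (k - i) * h j) ((n : ℝ) ^ i * gamH j + (r i : ℝ)))
          + {((r (k+1) : ℕ) : ℝ)} := by
  rw [Multiset.map_add, multiset_map_finset_sum, Multiset.map_singleton]
  have hmapped : ∀ i ∈ Finset.range k,
      Multiset.map (fun x => (n:ℝ) * x + (q:ℝ))
          (∑ j ∈ Finset.univ.erase 0,
            Multiset.replicate (n ^ (k - 1 - i) * h j) ((n : ℝ) ^ i * gamH j + (r i : ℝ)))
        = ∑ j ∈ Finset.univ.erase 0,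
            Multiset.replicate (n ^ (k - (i+1)) * h j)
              ((n : ℝ) ^ (i+1) * gamH j + (r (i+1) : ℝ)) := by
    intro i hi
    rw [multiset_map_finset_sum]
    refine Finset.sum_congr rfl fun j _ => ?_
    rw [Multiset.map_replicate]
    have h1 : (n:ℝ) * ((n : ℝ) ^ i * gamH j + (r i : ℝ)) + (q:ℝ)
        = (n : ℝ) ^ (i+1) * gamH j + (r (i+1) : ℝ) := by
      rw [hrec i]; ring
    have h2 : k - 1 - i = k - (i+1) := by omega
    rw [h1, h2]
  rw [Finset.sum_congr rfl hmapped]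
  rw [Finset.sum_range_succ']
  have hzero : (∑ j ∈ Finset.univ.erase 0,
      Multiset.replicate (n ^ (k - 0) * h j) ((n : ℝ) ^ 0 * gamH j + (r 0 : ℝ)))
      = n^k • (∑ j ∈ Finset.univ.erase 0, Multiset.replicate (h j) (gamH j)) := by
    rw [Finset.smul_sum]
    refine Finset.sum_congr rfl fun j _ => ?_
    rw [Multiset.nsmul_replicate, hr0]
    norm_num
  rw [hzero, hrec k]
  abel

instance powVert.instDecidableEq {α : Type u} [DecidableEq α] : ∀ k, DecidableEq (powVert α k)
  | 0 => inferInstanceAs (DecidableEq PUnit)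
  | 1 => inferInstanceAs (DecidableEq α)
  | k + 2 =>
      letI := powVert.instDecidableEq (α := α) (k + 1)
      inferInstanceAs (DecidableEq (powVert α (k + 1) × α))

set_option maxHeartbeats 1000000 in
/-- Degree, order and adjacency spectrum of the lexicographic power `H^k`
of a connected `q`-regular graph `H`; `r i = q·(nⁱ-1)/(n-1)` (the natural division
being exact). -/

theorem adjSpectrum_lexPow {α : Type u} [Fintype α]
    (H : SimpleGraph α) (n q t : ℕ)
    (hn : Fintype.card α = n) (hconn : H.Connected) (hreg : ∀ v, gdeg H v = q)
    (gamH : Fin (t + 1) → ℝ) (h : Fin (t + 1) → ℕ)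
    (hanti : StrictAnti gamH) (h1 : gamH 0 = q) (hh1 : h 0 = 1) (hhpos : ∀ j, 0 < h j)
    (hspec : adjSpectrum H = ∑ j, Multiset.replicate (h j) (gamH j))
    (r : ℕ → ℕ) (hr : ∀ i, r i = q * ((n ^ i - 1) / (n - 1))) :
    ∀ k : ℕ, 1 ≤ k →
      (∀ v, gdeg (lexPow H k) v = r k) ∧
      Fintype.card (powVert α k) = n ^ k ∧
      adjSpectrum (lexPow H k) =
        (∑ i ∈ Finset.range k, ∑ j ∈ Finset.univ.erase 0,
            Multiset.replicate (n ^ (k - 1 - i) * h j)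
              ((n : ℝ) ^ i * gamH j + ((r i : ℕ) : ℝ)))
          + {((r k : ℕ) : ℝ)} := by
  classical
  letI : DecidableEq α := Classical.decEq α
  have hne : Nonempty α := hconn.nonempty
  have hq : ∀ v, H.degree v = q := fun v => by rw [← gdeg_eq_degree]; exact hreg v
  have hnpos : 0 < n := hn ▸ Fintype.card_pos
  have hq1 : n = 1 → q = 0 := by
    intro h1'
    obtain ⟨v⟩ := hne
    have h2 := H.degree_lt_card_verts v
    rw [hn, h1'] at h2
    have := hq v; omega
  have hr0 : r 0 = 0 := by rw [hr]; simp
  have hrecN : ∀ i, r (i+1) = n * r i + q := by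
    intro i
    rcases eq_or_lt_of_le (show 1 ≤ n from hnpos) with h2 | h2
    · have hn1 : n = 1 := h2.symm
      have hq0 : q = 0 := hq1 hn1
      rw [hr, hr, hn1, hq0]; simp
    · have h3 : 2 ≤ n := h2
      have hdvd : (n - 1) ∣ (n ^ i - 1) := by
        have := Nat.sub_dvd_pow_sub_pow n 1 i
        simpa using this
      have h4 : 1 ≤ n ^ i := Nat.one_le_pow _ _ (by omega)
      have h6 : n * (n ^ i - 1) = n * n ^ i - n := by
        rw [Nat.mul_sub, mul_one]
      have hkey : n ^ (i+1) - 1 = n * (n ^ i - 1) + (n - 1) := by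
        rw [h6]
        have h5 : n ^ (i+1) = n * n ^ i := by rw [pow_succ, mul_comm]
        have h7 : n ≤ n * n ^ i := Nat.le_mul_of_pos_right n (by positivity)
        omega
      have hdiv : (n * (n ^ i - 1) + (n - 1)) / (n - 1)
          = n * ((n ^ i - 1) / (n - 1)) + 1 := by
        rw [Nat.add_div_right _ (by omega : 0 < n - 1), Nat.mul_div_assoc n hdvd]
      rw [hr, hr, hkey, hdiv]
      ring
  have hrecR : ∀ i, ((r (i+1) : ℕ) : ℝ) = (n:ℝ) * ((r i : ℕ) : ℝ) + (q:ℝ) := by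
    intro i
    rw [hrecN i]
    push_cast
    ring
  have hr1 : r 1 = q := by
    have := hrecN 0
    rw [hr0] at this
    simpa using this
  have hcard : ∀ k, 1 ≤ k → Fintype.card (powVert α k) = n ^ k := fun k hk => by
    rw [card_powVert k hk, hn]
  have hspecH : (H.adjMatrix ℝ).charpoly.roots
      = {(q:ℝ)} + ∑ j ∈ Finset.univ.erase 0, Multiset.replicate (h j) (gamH j) := by
    rw [← adjSpectrum_eq, hspec,
      ← Finset.add_sum_erase _ _ (Finset.mem_univ (0 : Fin (t+1))), hh1, h1,
      Multiset.replicate_one]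
  obtain ⟨B, e, s0, hBu, hBd, hJB, hes0, hmel⟩ := exists_eigenbasis H q hq
  have hmsum_e : ∑ j ∈ Finset.univ.erase s0, ({e j} : Multiset ℝ)
      = ∑ j ∈ Finset.univ.erase 0, Multiset.replicate (h j) (gamH j) := by
    have h2 : Multiset.map e Finset.univ.val
        = {(q:ℝ)} + ∑ j ∈ Finset.univ.erase 0, Multiset.replicate (h j) (gamH j) :=
      hmel.trans hspecH
    rw [multiset_map_univ, ← Finset.add_sum_erase _ _ (Finset.mem_univ s0), hes0] at h2
    exact add_left_cancel h2
  have main : ∀ k : ℕ, ∃ (S : Matrix (powVert α (k+1)) (powVert α (k+1)) ℝ)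
      (v : powVert α (k+1) → ℝ),
      IsUnit S.det ∧ (lexPow H (k+1)).adjMatrix ℝ * S = S * Matrix.diagonal v ∧
      Multiset.map v Finset.univ.val
        = (∑ i ∈ Finset.range (k+1), ∑ j ∈ Finset.univ.erase 0,
            Multiset.replicate (n ^ (k - i) * h j) ((n : ℝ) ^ i * gamH j + ((r i : ℕ) : ℝ)))
          + {((r (k+1) : ℕ) : ℝ)} := by
    intro k
    induction k with
    | zero =>
      refine ⟨B, e, hBu, hBd, ?_⟩
      have hrw : ∀ j ∈ Finset.univ.erase (0 : Fin (t+1)),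
          Multiset.replicate (n ^ (0 - 0) * h j) ((n : ℝ) ^ (0:ℕ) * gamH j + ((r 0 : ℕ) : ℝ))
            = Multiset.replicate (h j) (gamH j) := by
        intro j _
        rw [hr0]
        norm_num
      rw [Finset.sum_range_one, Finset.sum_congr rfl hrw,
        (show ((r 1 : ℕ) : ℝ) = (q:ℝ) by rw [hr1])]
      exact hmel.trans (hspecH.trans (add_comm _ _))
    | succ k ih =>
      obtain ⟨S, v, hSu, hSd, hmv⟩ := ih
      have hks := key_step (lexPow H (k+1)) H S v hSu hSd B e s0 hBu hBd hJB
      refine ⟨S ⊗ₖ B, _, hks.1, hks.2, ?_⟩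
      change Multiset.map _ (Finset.univ : Finset (powVert α (k+1) × α)).val = _
      rw [step_multiset v e s0 (q:ℝ) ((Fintype.card α : ℝ)) hes0, hmv,
        hcard (k+1) (by omega), hn, hmsum_e]
      exact formula_step n q t gamH h r hrecR hr0 (k+1)
  have hdeg : ∀ m : ℕ, ∀ v, gdeg (lexPow H (m+1)) v = r (m+1) := by
    intro m
    induction m with
    | zero =>
      intro v
      have : gdeg H v = q := hreg v
      rw [hr1]
      exact this
    | succ m ih =>
      intro v
      obtain ⟨a, b⟩ := v
      have iha : (lexPow H (m+1)).degree a = r (m+1) := by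
        rw [← gdeg_eq_degree]; exact ih a
      have ihb : H.degree b = q := hq b
      have hdl := degree_lexProd (lexPow H (m+1)) H a b
      rw [iha, ihb, hn] at hdl
      have : gdeg (lexPow H (m+2)) (a, b) = (lexProd (lexPow H (m+1)) H).degree (a, b) :=
        gdeg_eq_degree _ _
      rw [this, hdl]
      exact (hrecN (m+1)).symm
  intro k hk
  obtain ⟨k', rfl⟩ : ∃ k', k = k' + 1 := ⟨k - 1, by omega⟩
  refine ⟨hdeg k', hcard _ hk, ?_⟩
  obtain ⟨S, v, hSu, hSd, hmv⟩ := main k'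
  rw [adjSpectrum_eq, charpoly_conj' _ S (Matrix.diagonal v) hSu hSd,
    roots_charpoly_diagonal, hmv]
  have hexp : ∀ i, k' - i = k' + 1 - 1 - i := fun i => by omega
  simp_rw [hexp]
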